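/- The single-variable Arakawa–Kaneko eta function satisfies the duality η(k; n) = η(n; k) for all positive integers k and n, where η(k; s) = (1/Γ(s)) ∫₀^∞ t^{s-1} Li_k(1-e^t)/(1-e^t) dt. -/

import Mathlib

open MeasureTheory

/-- The polylogarithm `Li_k` on `(-∞, 0]` (the analytic continuation of the
series `Σ_{m≥1} z^m/m^k` to negative real arguments), defined recursively by
`Li_0(x) = x/(1-x)` and `Li_{k+1}(x) = ∫_0^x Li_k(u)/u du`
(so `Li_1(x) = -log(1-x)`). -/
noncomputable def Li : ℕ → ℝ → ℝ
  | 0, x => x / (1 - x)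
  | (k+1), x => ∫ u in (0 : ℝ)..x, Li k u / u

/-- The Arakawa–Kaneko type eta function at a positive integer argument:
`η(k; n) = (1/Γ(n)) ∫_0^∞ t^{n-1} Li_k(1-e^t)/(1-e^t) dt`, with `Γ(n) = (n-1)!`. -/
noncomputable def eta (k n : ℕ) : ℝ :=
  (1 / (Nat.factorial (n - 1) : ℝ)) *
    ∫ t in Set.Ioi (0 : ℝ), t ^ (n - 1) * Li k (1 - Real.exp t) / (1 - Real.exp t)

open Real Set Filter

section helpers

lemma integrable_pow_exp (m : ℕ) {c : ℝ} (hc : 0 < c) :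
    IntegrableOn (fun x : ℝ => x ^ m * Real.exp (-(c * x))) (Set.Ioi 0) := by
  have h := integrableOn_rpow_mul_exp_neg_mul_rpow (s := (m : ℝ)) (p := 1) (b := c)
    (by exact_mod_cast neg_one_lt_zero.trans_le (Nat.cast_nonneg m)) one_pos hc
  refine h.congr_fun (fun x hx => ?_) measurableSet_Ioi
  beta_reduce; rw [Real.rpow_one, Real.rpow_natCast, neg_mul]

lemma integrable_pow_exp1 (m : ℕ) :
    IntegrableOn (fun x : ℝ => x ^ m * Real.exp (-x)) (Set.Ioi 0) := by
  simpa using integrable_pow_exp m one_pos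

lemma exp_sub_pos {z : ℝ} (hz : z ≤ 0) (x : ℝ) : 0 < Real.exp x - z :=
  lt_of_lt_of_le (Real.exp_pos x) (by linarith)

lemma kernel_bound (k : ℕ) {u x : ℝ} (hu : u ≤ 0) (hx : 0 ≤ x) :
    ‖x ^ k / (Real.exp x - u)‖ ≤ x ^ k * Real.exp (-x) := by
  have h1 : Real.exp x ≤ Real.exp x - u := by linarith
  have h2 : 0 < Real.exp x - u := exp_sub_pos hu x
  rw [Real.norm_eq_abs, abs_div, abs_of_nonneg (pow_nonneg hx k),
    abs_of_pos h2, Real.exp_neg, div_le_iff₀ h2]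
  calc x ^ k = x ^ k * ((Real.exp x)⁻¹ * Real.exp x) := by
        rw [inv_mul_cancel₀ (Real.exp_ne_zero x)]; ring
    _ ≤ x ^ k * (Real.exp x)⁻¹ * (Real.exp x - u) := by
        rw [mul_assoc]
        exact mul_le_mul_of_nonneg_left
          (mul_le_mul_of_nonneg_left h1 (inv_nonneg.2 (Real.exp_pos x).le))
          (pow_nonneg hx k)

lemma log_form {z : ℝ} (hz : z ≤ 0) (x : ℝ) :
    Real.log (Real.exp x - z) - x = Real.log (1 - z * Real.exp (-x)) := by
  have h1 : (1 : ℝ) - z * Real.exp (-x) = (Real.exp x - z) * Real.exp (-x) := by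
    rw [sub_mul, ← Real.exp_add, add_neg_cancel, Real.exp_zero]
  rw [h1, Real.log_mul (ne_of_gt (exp_sub_pos hz x)) (Real.exp_ne_zero _), Real.log_exp]; ring

lemma log_bound {z : ℝ} (hz : z ≤ 0) (x : ℝ) :
    Real.log (Real.exp x - z) - x ∈ Set.Icc 0 (-z * Real.exp (-x)) := by
  rw [log_form hz x]
  have hpos : (0:ℝ) < 1 - z * Real.exp (-x) := by nlinarith [Real.exp_pos (-x)]
  constructor
  · apply Real.log_nonneg; nlinarith [Real.exp_pos (-x)]
  · have := Real.log_le_sub_one_of_pos hpos; linarith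

lemma integrable_kernel (m : ℕ) {z : ℝ} (hz : z ≤ 0) :
    IntegrableOn (fun x : ℝ => x ^ m / (Real.exp x - z)) (Set.Ioi 0) := by
  refine Integrable.mono' (integrable_pow_exp1 m) ?_ ?_
  · exact ((measurable_id.pow_const m).div
      ((Real.measurable_exp).sub measurable_const)).aestronglyMeasurable
  · filter_upwards [ae_restrict_mem measurableSet_Ioi] with x hx
    exact kernel_bound m hz (le_of_lt hx)

lemma integrable_kernel' (m : ℕ) {z : ℝ} (hz : z ≤ 0) :
    IntegrableOn (fun x : ℝ => x ^ m * (z / (Real.exp x - z))) (Set.Ioi 0) := by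
  have h : IntegrableOn (fun x : ℝ => z * (x ^ m / (Real.exp x - z))) (Set.Ioi 0) :=
    (integrable_kernel m hz).const_mul z
  refine h.congr_fun (fun x _ => ?_) measurableSet_Ioi
  ring

lemma integrable_logterm (m : ℕ) {z : ℝ} (hz : z ≤ 0) :
    IntegrableOn (fun x : ℝ => x ^ m * (Real.log (Real.exp x - z) - x)) (Set.Ioi 0) := by
  refine Integrable.mono' ((integrable_pow_exp1 m).const_mul (-z)) ?_ ?_
  · apply Measurable.aestronglyMeasurable
    apply Measurable.mul (measurable_id.pow_const m)
    exact (Real.measurable_log.comp ((Real.measurable_exp).sub measurable_const)).sub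
      measurable_id
  · filter_upwards [ae_restrict_mem measurableSet_Ioi] with x hx
    obtain ⟨hb0, hb1⟩ := log_bound hz x
    rw [Real.norm_eq_abs, abs_mul, abs_of_nonneg (pow_nonneg (le_of_lt hx) m),
      abs_of_nonneg hb0]
    calc x ^ m * (Real.log (Real.exp x - z) - x) ≤ x ^ m * (-z * Real.exp (-x)) :=
          mul_le_mul_of_nonneg_left hb1 (pow_nonneg (le_of_lt hx) m)
      _ = -z * (x ^ m * Real.exp (-x)) := by ring

lemma hasDerivAt_logexp {z : ℝ} (hz : z ≤ 0) (x : ℝ) :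
    HasDerivAt (fun x => Real.log (Real.exp x - z) - x) (z / (Real.exp x - z)) x := by
  have h1 : HasDerivAt (fun x : ℝ => Real.exp x - z) (Real.exp x) x :=
    (Real.hasDerivAt_exp x).sub_const z
  have h2 := (h1.log (ne_of_gt (exp_sub_pos hz x))).sub (hasDerivAt_id x)
  refine h2.congr_deriv ?_
  rw [div_sub_one (ne_of_gt (exp_sub_pos hz x))]; ring

lemma tendsto_logexp {z : ℝ} (hz : z ≤ 0) :
    Filter.Tendsto (fun x => Real.log (Real.exp x - z) - x) Filter.atTop (nhds 0) := by
  have h1 : Filter.Tendsto (fun x : ℝ => 1 - z * Real.exp (-x)) Filter.atTop (nhds 1) := by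
    have := (Real.tendsto_exp_neg_atTop_nhds_zero).const_mul z
    simpa using ((this.const_sub 1))
  have h2 : Filter.Tendsto (fun x : ℝ => Real.log (1 - z * Real.exp (-x)))
      Filter.atTop (nhds 0) := by
    have := (Real.continuousAt_log one_ne_zero).tendsto.comp h1
    simpa [Function.comp_def] using this
  exact h2.congr (fun x => (log_form hz x).symm)

lemma tendsto_pow_logexp (m : ℕ) {z : ℝ} (hz : z ≤ 0) :
    Filter.Tendsto (fun x => x ^ m * (Real.log (Real.exp x - z) - x))
      Filter.atTop (nhds 0) := by
  have hup : Filter.Tendsto (fun x : ℝ => -z * (x ^ m * Real.exp (-x)))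
      Filter.atTop (nhds 0) := by
    have := (tendsto_pow_mul_exp_neg_atTop_nhds_zero m).const_mul (-z)
    simpa using this
  refine tendsto_of_tendsto_of_tendsto_of_le_of_le' (tendsto_const_nhds) hup ?_ ?_
  · filter_upwards [Filter.eventually_ge_atTop (0:ℝ)] with x hx
    exact mul_nonneg (pow_nonneg hx m) (log_bound hz x).1
  · filter_upwards [Filter.eventually_ge_atTop (0:ℝ)] with x hx
    calc x ^ m * (Real.log (Real.exp x - z) - x) ≤ x ^ m * (-z * Real.exp (-x)) :=
          mul_le_mul_of_nonneg_left (log_bound hz x).2 (pow_nonneg hx m)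
      _ = -z * (x ^ m * Real.exp (-x)) := by ring

lemma base_integral {z : ℝ} (hz : z ≤ 0) :
    ∫ x in Set.Ioi (0:ℝ), z / (Real.exp x - z) = -Real.log (1 - z) := by
  have h := integral_Ioi_of_hasDerivAt_of_tendsto (a := 0)
    (f := fun x => Real.log (Real.exp x - z) - x)
    (f' := fun x => z / (Real.exp x - z))
    ((hasDerivAt_logexp hz 0).continuousAt.continuousWithinAt)
    (fun x _ => hasDerivAt_logexp hz x)
    (by simpa using integrable_kernel' 0 hz)
    (tendsto_logexp hz)
  rw [h]; simp [Real.exp_zero]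

lemma inner_integral {z : ℝ} (hz : z ≤ 0) (x : ℝ) :
    ∫ u in z..(0:ℝ), (Real.exp x - u)⁻¹ = Real.log (Real.exp x - z) - x := by
  have hd : ∀ u ∈ Set.uIcc z (0:ℝ),
      HasDerivAt (fun u => -Real.log (Real.exp x - u)) (Real.exp x - u)⁻¹ u := by
    intro u hu
    have hu0 : u ≤ 0 := by
      rcases Set.mem_uIcc.1 hu with h | h
      · exact h.2
      · exact h.2.trans hz
    have hne : Real.exp x - u ≠ 0 := ne_of_gt (exp_sub_pos hu0 x)
    have h1 : HasDerivAt (fun u : ℝ => Real.exp x - u) (-1) u := by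
      simpa using (hasDerivAt_id u).const_sub (Real.exp x)
    have := (h1.log hne).neg
    refine this.congr_deriv ?_
    rw [neg_div, neg_neg, one_div]
  have hcont : ContinuousOn (fun u : ℝ => (Real.exp x - u)⁻¹) (Set.uIcc z 0) := by
    apply ContinuousOn.inv₀ (Continuous.continuousOn (by continuity))
    intro u hu
    have hu0 : u ≤ 0 := by
      rcases Set.mem_uIcc.1 hu with h | h
      · exact h.2
      · exact h.2.trans hz
    exact ne_of_gt (exp_sub_pos hu0 x)
  rw [intervalIntegral.integral_eq_sub_of_hasDerivAt hd (hcont.intervalIntegrable)]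
  simp [Real.log_exp]; ring

lemma ibp_step (k : ℕ) {z : ℝ} (hz : z ≤ 0) :
    ∫ x in Set.Ioi (0:ℝ), x ^ k * (Real.log (Real.exp x - z) - x)
      = -(1 / (k+1 : ℝ)) * ∫ x in Set.Ioi (0:ℝ), x ^ (k+1) * (z / (Real.exp x - z)) := by
  set F : ℝ → ℝ := fun x => x ^ (k+1) / (k+1 : ℝ) * (Real.log (Real.exp x - z) - x) with hF
  have hderiv : ∀ x : ℝ, HasDerivAt F
      (x ^ k * (Real.log (Real.exp x - z) - x)
        + x ^ (k+1) / (k+1:ℝ) * (z / (Real.exp x - z))) x := by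
    intro x
    have h1 : HasDerivAt (fun x : ℝ => x ^ (k+1) / (k+1:ℝ)) (x ^ k) x := by
      have := (hasDerivAt_pow (k+1) x).div_const (k+1 : ℝ)
      refine this.congr_deriv ?_
      rw [Nat.add_sub_cancel]; push_cast; field_simp
    exact h1.mul (hasDerivAt_logexp hz x)
  have htend : Filter.Tendsto F Filter.atTop (nhds 0) := by
    have := (tendsto_pow_logexp (k+1) hz).div_const (k+1 : ℝ)
    simpa [hF, div_mul_eq_mul_div, zero_div] using this.congr (fun x => by ring)
  have hA : IntegrableOn (fun x : ℝ => x ^ k * (Real.log (Real.exp x - z) - x)) (Set.Ioi 0) :=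
    integrable_logterm k hz
  have hB : IntegrableOn
      (fun x : ℝ => x ^ (k+1) / (k+1:ℝ) * (z / (Real.exp x - z))) (Set.Ioi 0) := by
    have h : IntegrableOn (fun x : ℝ => (1/(k+1:ℝ)) * (x ^ (k+1) * (z / (Real.exp x - z))))
        (Set.Ioi 0) := (integrable_kernel' (k+1) hz).const_mul (1/(k+1:ℝ))
    refine h.congr_fun (fun x _ => ?_) measurableSet_Ioi
    ring
  have hFTC := integral_Ioi_of_hasDerivAt_of_tendsto (a := 0) (f := F)
    (f' := fun x => x ^ k * (Real.log (Real.exp x - z) - x)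
      + x ^ (k+1) / (k+1:ℝ) * (z / (Real.exp x - z)))
    ((hderiv 0).continuousAt.continuousWithinAt)
    (fun x _ => hderiv x) (hA.add hB) htend
  have hF0 : F 0 = 0 := by simp [hF]
  rw [integral_add hA hB, hF0, sub_zero] at hFTC
  have hBeq : ∫ x in Set.Ioi (0:ℝ), x ^ (k+1) / (k+1:ℝ) * (z / (Real.exp x - z))
      = (1/(k+1:ℝ)) * ∫ x in Set.Ioi (0:ℝ), x ^ (k+1) * (z / (Real.exp x - z)) := by
    rw [← integral_const_mul]
    exact setIntegral_congr_fun measurableSet_Ioi (fun x _ => by ring)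
  rw [hBeq] at hFTC
  linarith

-- Fubini for the induction step
lemma swap_step (k : ℕ) {z : ℝ} (hz : z ≤ 0) :
    ∫ u in Set.Ioc z (0:ℝ), (∫ x in Set.Ioi (0:ℝ), x ^ k / (Real.exp x - u))
      = ∫ x in Set.Ioi (0:ℝ), x ^ k * (Real.log (Real.exp x - z) - x) := by
  have hmeas : Measurable (fun p : ℝ × ℝ => p.2 ^ k / (Real.exp p.2 - p.1)) :=
    ((measurable_snd.pow_const k).div
      ((Real.measurable_exp.comp measurable_snd).sub measurable_fst))
  have hprod : Integrable (Function.uncurry fun u x => x ^ k / (Real.exp x - u))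
      ((volume.restrict (Set.Ioc z 0)).prod (volume.restrict (Set.Ioi 0))) := by
    have hg : Integrable (fun p : ℝ × ℝ => (1:ℝ) * (p.2 ^ k * Real.exp (-p.2)))
        ((volume.restrict (Set.Ioc z 0)).prod (volume.restrict (Set.Ioi 0))) := by
      exact Integrable.mul_prod
        ((integrableOn_const_iff (C := (1:ℝ))).2 (Or.inr measure_Ioc_lt_top))
        (integrable_pow_exp1 k)
    refine Integrable.mono' hg hmeas.aestronglyMeasurable ?_
    rw [Measure.prod_restrict]
    filter_upwards [ae_restrict_mem (measurableSet_Ioc.prod measurableSet_Ioi)] with p hp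
    obtain ⟨hu, hx⟩ := hp
    rw [one_mul]
    exact kernel_bound k hu.2 (le_of_lt hx)
  have hswap := integral_integral_swap hprod
  rw [hswap]
  refine setIntegral_congr_fun measurableSet_Ioi (fun x hx => ?_)
  have h1 : ∫ u in Set.Ioc z (0:ℝ), x ^ k / (Real.exp x - u)
      = x ^ k * ∫ u in Set.Ioc z (0:ℝ), (Real.exp x - u)⁻¹ := by
    rw [← integral_const_mul]
    exact setIntegral_congr_fun measurableSet_Ioc (fun u _ => by
      rw [div_eq_mul_inv])
  rw [h1, ← intervalIntegral.integral_of_le hz, inner_integral hz x]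

-- Main integral formula for Li
lemma Li_integral : ∀ (k : ℕ) {z : ℝ}, z < 0 →
    Li (k+1) z = (1 / (Nat.factorial k : ℝ)) *
      ∫ x in Set.Ioi (0:ℝ), x ^ k * (z / (Real.exp x - z)) := by
  intro k
  induction k with
  | zero =>
      intro z hz
      have hLi : Li 1 z = -Real.log (1 - z) := by
        show (∫ u in (0:ℝ)..z, Li 0 u / u) = -Real.log (1 - z)
        have hcong : ∫ u in (0:ℝ)..z, Li 0 u / u = ∫ u in (0:ℝ)..z, (1 - u)⁻¹ := by
          apply intervalIntegral.integral_congr_ae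
          have h0 : ∀ᵐ u : ℝ, u ≠ (0:ℝ) := by
            refine eventually_of_mem (U := {(0:ℝ)}ᶜ) ?_ (fun u hu => hu)
            rw [mem_ae_iff, compl_compl]
            exact measure_singleton 0
          filter_upwards [h0] with u hu _
          show u / (1 - u) / u = (1 - u)⁻¹
          rw [div_div, mul_comm, ← div_div, div_self hu, one_div]
        rw [hcong]
        have hd : ∀ u ∈ Set.uIcc (0:ℝ) z,
            HasDerivAt (fun u => -Real.log (1 - u)) (1 - u)⁻¹ u := by
          intro u hu
          have hu0 : u ≤ 0 := by
            rcases Set.mem_uIcc.1 hu with h | h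
            · exact h.2.trans (le_of_lt hz)
            · exact h.2
          have hne : (1:ℝ) - u ≠ 0 := by linarith
          have h1 : HasDerivAt (fun u : ℝ => 1 - u) (-1) u := by
            simpa using (hasDerivAt_id u).const_sub (1:ℝ)
          have := (h1.log hne).neg
          refine this.congr_deriv ?_
          rw [neg_div, neg_neg, one_div]
        have hcont : ContinuousOn (fun u : ℝ => (1 - u)⁻¹) (Set.uIcc (0:ℝ) z) := by
          apply ContinuousOn.inv₀ (Continuous.continuousOn (by continuity))
          intro u hu
          have hu0 : u ≤ 0 := by
            rcases Set.mem_uIcc.1 hu with h | h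
            · exact h.2.trans (le_of_lt hz)
            · exact h.2
          intro hc; rw [sub_eq_zero] at hc; linarith
        rw [intervalIntegral.integral_eq_sub_of_hasDerivAt hd hcont.intervalIntegrable]
        simp
      rw [hLi]
      have : ∫ x in Set.Ioi (0:ℝ), x ^ 0 * (z / (Real.exp x - z))
          = ∫ x in Set.Ioi (0:ℝ), z / (Real.exp x - z) :=
        setIntegral_congr_fun measurableSet_Ioi (fun x _ => by simp)
      rw [this, base_integral (le_of_lt hz)]
      simp
  | succ k ih =>
      intro z hz
      have hzle : z ≤ 0 := le_of_lt hz
      -- Li (k+2) z = ∫ u in 0..z, Li (k+1) u / u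
      show (∫ u in (0:ℝ)..z, Li (k+1) u / u) = _
      have key : ∫ u in (0:ℝ)..z, Li (k+1) u / u
          = -∫ u in Set.Ioc z (0:ℝ), (1 / (Nat.factorial k : ℝ)) *
              ∫ x in Set.Ioi (0:ℝ), x ^ k / (Real.exp x - u) := by
        rw [intervalIntegral.integral_symm, intervalIntegral.integral_of_le hzle]
        congr 1
        apply setIntegral_congr_ae measurableSet_Ioc
        have h0 : ∀ᵐ u : ℝ, u ≠ (0:ℝ) := by
          refine eventually_of_mem (U := {(0:ℝ)}ᶜ) ?_ (fun u hu => hu)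
          rw [mem_ae_iff, compl_compl]
          exact measure_singleton 0
        filter_upwards [h0] with u hu hmem
        have huneg : u < 0 := lt_of_le_of_ne hmem.2 hu
        rw [ih huneg]
        rw [mul_div_assoc, div_eq_mul_inv (∫ x in Set.Ioi (0:ℝ), x ^ k * (u / (Real.exp x - u))),
          ← integral_mul_const]
        congr 1
        refine setIntegral_congr_fun measurableSet_Ioi (fun x _ => ?_)
        have hne : Real.exp x - u ≠ 0 := ne_of_gt (exp_sub_pos (le_of_lt huneg) x)
        field_simp
      rw [key, integral_const_mul, swap_step k hzle, ibp_step k hzle]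
      set I := ∫ x in Set.Ioi (0:ℝ), x ^ (k+1) * (z / (Real.exp x - z)) with hI
      have hfact : ((Nat.factorial (k+1) : ℝ)) = (k+1 : ℝ) * (Nat.factorial k : ℝ) := by
        rw [Nat.factorial_succ]; push_cast; ring
      rw [hfact]
      have hk0 : (Nat.factorial k : ℝ) ≠ 0 := Nat.cast_ne_zero.2 (Nat.factorial_ne_zero k)
      have hk1 : (k+1 : ℝ) ≠ 0 := by positivity
      have hsplit : (1:ℝ)/((k+1:ℝ)*(Nat.factorial k:ℝ))
          = (1/(k+1:ℝ)) * (1/(Nat.factorial k:ℝ)) := by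
        rw [one_div, mul_inv, one_div, one_div]
      rw [hsplit]
      ring

end helpers

section main

lemma denom_ge {t x : ℝ} (ht : 0 ≤ t) (hx : 0 ≤ x) :
    Real.exp ((x + t)/2) ≤ Real.exp x + Real.exp t - 1 := by
  rcases le_total x t with h | h
  · have h1 : Real.exp ((x+t)/2) ≤ Real.exp t := Real.exp_le_exp.2 (by linarith)
    have h2 : (1:ℝ) ≤ Real.exp x := Real.one_le_exp hx
    linarith
  · have h1 : Real.exp ((x+t)/2) ≤ Real.exp x := Real.exp_le_exp.2 (by linarith)
    have h2 : (1:ℝ) ≤ Real.exp t := Real.one_le_exp ht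
    linarith

lemma D_integrable (a b : ℕ) :
    Integrable (Function.uncurry fun t x => t ^ b * x ^ a / (Real.exp x + Real.exp t - 1))
      ((volume.restrict (Set.Ioi (0:ℝ))).prod (volume.restrict (Set.Ioi (0:ℝ)))) := by
  have hmeas : Measurable
      (fun p : ℝ × ℝ => p.1 ^ b * p.2 ^ a / (Real.exp p.2 + Real.exp p.1 - 1)) :=
    ((measurable_fst.pow_const b).mul (measurable_snd.pow_const a)).div
      (((Real.measurable_exp.comp measurable_snd).add
        (Real.measurable_exp.comp measurable_fst)).sub measurable_const)
  have hg : Integrable (fun p : ℝ × ℝ =>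
      (p.1 ^ b * Real.exp (-(1/2 * p.1))) * (p.2 ^ a * Real.exp (-(1/2 * p.2))))
      ((volume.restrict (Set.Ioi (0:ℝ))).prod (volume.restrict (Set.Ioi (0:ℝ)))) :=
    Integrable.mul_prod (integrable_pow_exp b one_half_pos) (integrable_pow_exp a one_half_pos)
  refine Integrable.mono' hg hmeas.aestronglyMeasurable ?_
  rw [Measure.prod_restrict]
  filter_upwards [ae_restrict_mem (measurableSet_Ioi.prod measurableSet_Ioi)] with p hp
  obtain ⟨ht, hx⟩ := hp
  have ht' : (0:ℝ) < p.1 := ht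
  have hx' : (0:ℝ) < p.2 := hx
  have hd : 0 < Real.exp p.2 + Real.exp p.1 - 1 :=
    lt_of_lt_of_le (Real.exp_pos _) (denom_ge ht'.le hx'.le)
  have hnum : 0 ≤ p.1 ^ b * p.2 ^ a := mul_nonneg (pow_nonneg ht'.le b) (pow_nonneg hx'.le a)
  show ‖p.1 ^ b * p.2 ^ a / (Real.exp p.2 + Real.exp p.1 - 1)‖ ≤ _
  rw [Real.norm_eq_abs, abs_div, abs_of_nonneg hnum, abs_of_pos hd, div_le_iff₀ hd]
  have h1 : Real.exp (-(1/2 * p.1)) * Real.exp (-(1/2 * p.2))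
      = Real.exp (-((p.2 + p.1)/2)) := by
    rw [← Real.exp_add]; ring_nf
  have h2 : (1:ℝ) ≤ Real.exp (-((p.2 + p.1)/2)) * (Real.exp p.2 + Real.exp p.1 - 1) := by
    have h3 := mul_le_mul_of_nonneg_left (denom_ge ht'.le hx'.le)
      (le_of_lt (Real.exp_pos (-((p.2 + p.1)/2))))
    rwa [← Real.exp_add, neg_add_cancel, Real.exp_zero] at h3
  calc p.1 ^ b * p.2 ^ a = p.1 ^ b * p.2 ^ a * 1 := by ring
    _ ≤ p.1 ^ b * p.2 ^ a * (Real.exp (-((p.2 + p.1)/2))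
          * (Real.exp p.2 + Real.exp p.1 - 1)) :=
        mul_le_mul_of_nonneg_left h2 hnum
    _ = p.1 ^ b * Real.exp (-(1/2 * p.1)) * (p.2 ^ a * Real.exp (-(1/2 * p.2)))
          * (Real.exp p.2 + Real.exp p.1 - 1) := by rw [← h1]; ring

lemma D_symm (a b : ℕ) :
    (∫ t in Set.Ioi (0:ℝ), ∫ x in Set.Ioi (0:ℝ), t ^ b * x ^ a / (Real.exp x + Real.exp t - 1))
      = ∫ t in Set.Ioi (0:ℝ), ∫ x in Set.Ioi (0:ℝ),
          t ^ a * x ^ b / (Real.exp x + Real.exp t - 1) := by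
  have hswap := integral_integral_swap (D_integrable a b)
  rw [hswap]
  refine setIntegral_congr_fun measurableSet_Ioi (fun t _ => ?_)
  refine setIntegral_congr_fun measurableSet_Ioi (fun x _ => ?_)
  ring

lemma eta_eq (a b : ℕ) :
    eta (a+1) (b+1) = (1/((Nat.factorial a : ℝ) * (Nat.factorial b : ℝ))) *
      ∫ t in Set.Ioi (0:ℝ), ∫ x in Set.Ioi (0:ℝ),
        t ^ b * x ^ a / (Real.exp x + Real.exp t - 1) := by
  unfold eta
  simp only [Nat.add_sub_cancel]
  have hpt : ∀ t ∈ Set.Ioi (0:ℝ),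
      t ^ b * Li (a+1) (1 - Real.exp t) / (1 - Real.exp t)
        = (1/(Nat.factorial a : ℝ)) *
            ∫ x in Set.Ioi (0:ℝ), t ^ b * x ^ a / (Real.exp x + Real.exp t - 1) := by
    intro t ht
    have htpos : (0:ℝ) < t := ht
    have h1t : (1:ℝ) < Real.exp t := by
      rw [← Real.exp_zero]; exact Real.exp_lt_exp.2 htpos
    have hz : 1 - Real.exp t < 0 := by linarith
    have hzne : 1 - Real.exp t ≠ 0 := ne_of_lt hz
    rw [Li_integral a hz]
    have hIdiv : (∫ x in Set.Ioi (0:ℝ),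
          x ^ a * ((1 - Real.exp t) / (Real.exp x - (1 - Real.exp t)))) / (1 - Real.exp t)
        = ∫ x in Set.Ioi (0:ℝ), x ^ a / (Real.exp x - (1 - Real.exp t)) := by
      rw [← integral_div]
      refine setIntegral_congr_fun measurableSet_Ioi (fun x _ => ?_)
      have hwne : Real.exp x - (1 - Real.exp t) ≠ 0 := ne_of_gt (exp_sub_pos hz.le x)
      field_simp
    have hstep : t ^ b * ((1/(Nat.factorial a : ℝ)) * ∫ x in Set.Ioi (0:ℝ),
          x ^ a * ((1 - Real.exp t) / (Real.exp x - (1 - Real.exp t)))) / (1 - Real.exp t)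
        = (1/(Nat.factorial a : ℝ)) * (t ^ b * ((∫ x in Set.Ioi (0:ℝ),
            x ^ a * ((1 - Real.exp t) / (Real.exp x - (1 - Real.exp t)))) / (1 - Real.exp t))) := by
      ring
    rw [hstep, hIdiv, ← integral_const_mul (t ^ b)]
    congr 1
    refine setIntegral_congr_fun measurableSet_Ioi (fun x _ => ?_)
    have : Real.exp x - (1 - Real.exp t) = Real.exp x + Real.exp t - 1 := by ring
    rw [this, mul_div_assoc]
  rw [setIntegral_congr_fun measurableSet_Ioi hpt, integral_const_mul]
  have hsplit : (1:ℝ)/((Nat.factorial a : ℝ) * (Nat.factorial b : ℝ))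
      = (1/(Nat.factorial b : ℝ)) * (1/(Nat.factorial a : ℝ)) := by
    rw [one_div, mul_inv, one_div, one_div]; ring
  rw [hsplit]
  ring

end main


/-- Duality `η(k; n) = η(n; k)` for positive integers `k`, `n`. -/
theorem eta_duality (k n : ℕ) (hk : 1 ≤ k) (hn : 1 ≤ n) : eta k n = eta n k := by
  cases k with
  | zero => omega
  | succ a =>
    cases n with
    | zero => omega
    | succ b =>
      rw [eta_eq a b, eta_eq b a, D_symm a b, mul_comm (Nat.factorial a : ℝ)]
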